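/- In the setting of the separation lemma, if additionally at least one of χ₁, χ₂ is nonconstant, then the pair (λ, τ) with χ₁ + λχ₂ ≡ τ is unique, and G₂(T) = λ G₁(T) and R(T) = τ Tr G₁(T) for all T. -/

import Mathlib

open Matrix

variable {n : ℕ}

lemma vecMulVec_self_isSelfAdjoint (u : Fin n → ℝ) :
    _root_.IsSelfAdjoint (vecMulVec u u) := by
  ext i j
  simp [vecMulVec_apply, Matrix.star_apply, mul_comm]

lemma vecMulVec_mul_self (u : Fin n → ℝ) (hu : u ⬝ᵥ u = 1) :
    vecMulVec u u * vecMulVec u u = vecMulVec u u := by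
  ext i j
  simp only [Matrix.mul_apply, vecMulVec_apply]
  have : ∑ k, u i * u k * (u k * u j) = (u i * u j) * (u ⬝ᵥ u) := by
    simp only [dotProduct, Finset.mul_sum]
    exact Finset.sum_congr rfl fun k _ => by ring
  rw [this, hu, mul_one]

lemma trace_mul_vecMulVec (G : Matrix (Fin n) (Fin n) ℝ) (u : Fin n → ℝ) :
    (G * vecMulVec u u).trace = u ⬝ᵥ G *ᵥ u := by
  simp only [Matrix.trace, Matrix.diag, Matrix.mul_apply, vecMulVec_apply,
    dotProduct, mulVec, Finset.mul_sum]
  exact Finset.sum_congr rfl fun i _ => Finset.sum_congr rfl fun j _ => by ring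

lemma smul_vecMulVec_posSemidef (u : Fin n → ℝ) (ω : ℝ) (hω : 0 ≤ ω) :
    (ω • vecMulVec u u).PosSemidef := by
  refine Matrix.PosSemidef.of_dotProduct_mulVec_nonneg ?_ ?_
  · exact IsSelfAdjoint.smul (star_trivial ω) (vecMulVec_self_isSelfAdjoint u)
  · intro x
    have : star x ⬝ᵥ (ω • vecMulVec u u) *ᵥ x = ω * ((u ⬝ᵥ x) * (u ⬝ᵥ x)) := by
      simp only [star_trivial, smul_mulVec, dotProduct_smul, smul_eq_mul]
      congr 1
      simp only [dotProduct, mulVec, vecMulVec_apply, Finset.mul_sum, Finset.sum_mul]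
      rw [Finset.sum_comm]
      exact Finset.sum_congr rfl fun i _ => Finset.sum_congr rfl fun j _ => by ring
    rw [this]
    exact mul_nonneg hω (mul_self_nonneg _)

lemma spectrum_smul_vecMulVec_subset (u : Fin n → ℝ) (hu : u ⬝ᵥ u = 1) (ω : ℝ) :
    spectrum ℝ (ω • vecMulVec u u) ⊆ {0, ω} := by
  set A := ω • vecMulVec u u with hA
  have h1 : A * A = ω • A := by
    rw [hA, smul_mul_smul_comm, vecMulVec_mul_self u hu, smul_smul]
  intro μ hμ
  by_contra h
  simp only [Set.mem_insert_iff, Set.mem_singleton_iff, not_or] at h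
  obtain ⟨hμ0, hμω⟩ := h
  have hμω' : μ - ω ≠ 0 := sub_ne_zero.mpr hμω
  clear_value A
  clear hA
  set x : ℝ := μ⁻¹ with hxdef
  set y : ℝ := (μ * (μ - ω))⁻¹ with hydef
  have expand : (μ • 1 - A) * (x • 1 + y • A) = (μ * x) • 1 + (μ * y - x - ω * y) • A := by
    rw [sub_mul, mul_add, mul_add]
    simp only [smul_mul_assoc, mul_smul_comm, one_mul, mul_one, h1]
    module
  have expand' : (x • 1 + y • A) * (μ • 1 - A) = (μ * x) • 1 + (μ * y - x - ω * y) • A := by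
    rw [add_mul, mul_sub, mul_sub]
    simp only [smul_mul_assoc, mul_smul_comm, one_mul, mul_one, h1]
    module
  have hx : μ * x = 1 := by rw [hxdef]; field_simp
  have hy : μ * y - x - ω * y = 0 := by rw [hxdef, hydef]; field_simp; ring
  have hone : (μ • 1 - A) * (x • 1 + y • A) = 1 := by
    rw [expand, hx, hy, one_smul, zero_smul, add_zero]
  have hone' : (x • 1 + y • A) * (μ • 1 - A) = 1 := by
    rw [expand', hx, hy, one_smul, zero_smul, add_zero]
  have : IsUnit (algebraMap ℝ (Matrix (Fin n) (Fin n) ℝ) μ - A) := by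
    rw [Algebra.algebraMap_eq_smul_one]
    exact ⟨⟨_, _, hone, hone'⟩, rfl⟩
  exact (spectrum.notMem_iff.mpr this) hμ

lemma cfc_smul_vecMulVec [Nonempty (Fin n)] (χ : ℝ → ℝ) (hχ : Continuous χ)
    (u : Fin n → ℝ) (hu : u ⬝ᵥ u = 1) (ω : ℝ) (hω : 0 ≤ ω) :
    cfc χ (ω • vecMulVec u u) = (χ ω - χ 0) • vecMulVec u u + (χ 0) • 1 := by
  have hsa : _root_.IsSelfAdjoint (ω • vecMulVec u u) :=
    (smul_vecMulVec_posSemidef u ω hω).1.isSelfAdjoint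
  rcases eq_or_lt_of_le hω with h0 | h0
  · subst h0
    simp only [zero_smul, sub_self]
    rw [cfc_congr (g := fun _ => χ 0) (by
      intro x hx
      rw [spectrum.zero_eq] at hx
      simp only [Set.mem_singleton_iff] at hx
      rw [hx]), cfc_const _ _ (by simp), Algebra.algebraMap_eq_smul_one, zero_add]
  · set c : ℝ := (χ ω - χ 0) / ω with hc
    have hω' : ω ≠ 0 := ne_of_gt h0
    have hcongr : cfc χ (ω • vecMulVec u u) = cfc (fun t => c * t + χ 0) (ω • vecMulVec u u) := by
      apply cfc_congr
      intro t ht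
      rcases spectrum_smul_vecMulVec_subset u hu ω ht with rfl | rfl
      · simp
      · simp only [hc]; field_simp; ring
    rw [hcongr, cfc_add (a := ω • vecMulVec u u) (fun t => c * t) (fun _ => χ 0) (by fun_prop) (by fun_prop),
      cfc_const_mul_id _ _ hsa, cfc_const _ _ hsa, Algebra.algebraMap_eq_smul_one,
      smul_smul]
    congr 2
    rw [hc, div_mul_cancel₀ _ hω']

lemma symm_eq_zero_of_unit_quadratic (M : Matrix (Fin n) (Fin n) ℝ) (hM : Mᵀ = M)
    (h : ∀ u : Fin n → ℝ, u ⬝ᵥ u = 1 → u ⬝ᵥ M *ᵥ u = 0) : M = 0 := by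
  have hv : ∀ v : Fin n → ℝ, v ⬝ᵥ M *ᵥ v = 0 := by
    intro v
    by_cases hv0 : v = 0
    · simp [hv0]
    · have hpos : 0 < v ⬝ᵥ v := by
        rcases lt_or_eq_of_le (Finset.sum_nonneg fun i _ => mul_self_nonneg (v i) :
          (0:ℝ) ≤ v ⬝ᵥ v) with h' | h'
        · exact h'
        · exact absurd (dotProduct_self_eq_zero.mp h'.symm) hv0
      set c : ℝ := Real.sqrt (v ⬝ᵥ v) with hcdef
      have hc : c ^ 2 = v ⬝ᵥ v := Real.sq_sqrt hpos.le
      have hc0 : c ≠ 0 := by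
        rw [hcdef]
        exact ne_of_gt (Real.sqrt_pos.mpr hpos)
      have hu : (c⁻¹ • v) ⬝ᵥ (c⁻¹ • v) = 1 := by
        rw [smul_dotProduct, dotProduct_smul, smul_eq_mul, smul_eq_mul, ← mul_assoc, ← hc, sq]
        field_simp
      have := h (c⁻¹ • v) hu
      rw [smul_dotProduct, mulVec_smul, dotProduct_smul, smul_eq_mul, smul_eq_mul] at this
      have hcc : c⁻¹ * (c⁻¹ * (v ⬝ᵥ M *ᵥ v)) = 0 := this
      field_simp at hcc
      simpa using hcc
  have key : ∀ i j : Fin n, Pi.single i (1:ℝ) ⬝ᵥ M *ᵥ Pi.single j (1:ℝ) = M i j := by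
    intro i j
    rw [mulVec_single, single_dotProduct]
    simp
  ext i j
  have hsym : M j i = M i j := by conv_lhs => rw [← hM, Matrix.transpose_apply]
  have hii := hv (Pi.single i 1)
  have hjj := hv (Pi.single j 1)
  have hij := hv (Pi.single i 1 + Pi.single j 1)
  rw [add_dotProduct, mulVec_add, dotProduct_add, dotProduct_add, key, key, key, key] at hij
  rw [key] at hii
  rw [key] at hjj
  simp only [Matrix.zero_apply]
  linarith

/-- In the setting of the separation lemma, if moreover at least one of `χ₁, χ₂` is
nonconstant on `ℝ₊`, then the pair `(λ, τ)` with `χ₁ + λχ₂ ≡ τ` on `ℝ₊` is unique,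
and `G₂ ≡ λ G₁`, `R ≡ τ Tr G₁`. -/
theorem matrix_separation_of_variables_unique {n : ℕ} (χ₁ χ₂ : ℝ → ℝ)
    (hχ₁ : Continuous χ₁) (hχ₂ : Continuous χ₂)
    (G₁ G₂ : ℝ → Matrix (Fin n) (Fin n) ℝ)
    (hG₁ : ∀ T, (G₁ T).IsHermitian) (hG₂ : ∀ T, (G₂ T).IsHermitian)
    (T₀ : ℝ) (hT₀ : (G₁ T₀).trace ≠ 0)
    (R : ℝ → ℝ)
    (hmain : ∀ T : ℝ, ∀ Ω : Matrix (Fin n) (Fin n) ℝ, Ω.PosSemidef →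
      (G₁ T * cfc χ₁ Ω).trace + (G₂ T * cfc χ₂ Ω).trace = R T)
    (hnonconst : (∃ ω₁ ω₂ : ℝ, 0 ≤ ω₁ ∧ 0 ≤ ω₂ ∧ χ₁ ω₁ ≠ χ₁ ω₂)
      ∨ (∃ ω₁ ω₂ : ℝ, 0 ≤ ω₁ ∧ 0 ≤ ω₂ ∧ χ₂ ω₁ ≠ χ₂ ω₂)) :
    (∃! p : ℝ × ℝ, ∀ ω : ℝ, 0 ≤ ω → χ₁ ω + p.1 * χ₂ ω = p.2)
      ∧ ∀ l τ : ℝ, (∀ ω : ℝ, 0 ≤ ω → χ₁ ω + l * χ₂ ω = τ) →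
          (∀ T, G₂ T = l • G₁ T) ∧ (∀ T, R T = τ * (G₁ T).trace) := by
  haveI hne : Nonempty (Fin n) := by
    by_contra h
    haveI : IsEmpty (Fin n) := not_nonempty_iff.mp h
    exact hT₀ (by simp [Matrix.trace])
  obtain ⟨i₀⟩ := id hne
  have hu₀ : (Pi.single i₀ (1:ℝ)) ⬝ᵥ (Pi.single i₀ (1:ℝ)) = 1 := by
    rw [single_dotProduct]; simp
  -- trace of G * (a • P + b • 1)
  have htrace : ∀ (G P : Matrix (Fin n) (Fin n) ℝ) (a b : ℝ),
      (G * (a • P + b • (1:Matrix (Fin n) (Fin n) ℝ))).trace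
        = a * (G * P).trace + b * G.trace := by
    intro G P a b
    rw [mul_add, Matrix.mul_smul, Matrix.mul_smul, mul_one, Matrix.trace_add,
      Matrix.trace_smul, Matrix.trace_smul, smul_eq_mul, smul_eq_mul]
  -- the base equation at Ω = 0
  have h0 : ∀ T, χ₁ 0 * (G₁ T).trace + χ₂ 0 * (G₂ T).trace = R T := by
    intro T
    have hz : (0 : Matrix (Fin n) (Fin n) ℝ) = (0:ℝ) • vecMulVec (Pi.single i₀ 1) (Pi.single i₀ 1) := by
      rw [zero_smul]
    have h := hmain T 0 Matrix.PosSemidef.zero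
    rw [hz, cfc_smul_vecMulVec χ₁ hχ₁ _ hu₀ 0 le_rfl,
      cfc_smul_vecMulVec χ₂ hχ₂ _ hu₀ 0 le_rfl, htrace, htrace] at h
    simpa using h
  -- transpose facts
  have hGt : ∀ (A : Matrix (Fin n) (Fin n) ℝ), A.IsHermitian → Aᵀ = A := by
    intro A hA
    ext i j
    rw [Matrix.transpose_apply]
    simpa using hA.apply i j
  -- the matrix relation
  have hM : ∀ T : ℝ, ∀ ω : ℝ, 0 ≤ ω →
      (χ₁ ω - χ₁ 0) • G₁ T + (χ₂ ω - χ₂ 0) • G₂ T = 0 := by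
    intro T ω hω
    apply symm_eq_zero_of_unit_quadratic
    · rw [Matrix.transpose_add, Matrix.transpose_smul, Matrix.transpose_smul,
        hGt _ (hG₁ T), hGt _ (hG₂ T)]
    · intro u hu
      have h1 := hmain T (ω • vecMulVec u u) (smul_vecMulVec_posSemidef u ω hω)
      rw [cfc_smul_vecMulVec χ₁ hχ₁ u hu ω hω, cfc_smul_vecMulVec χ₂ hχ₂ u hu ω hω,
        htrace, htrace, trace_mul_vecMulVec, trace_mul_vecMulVec] at h1
      have h2 := h0 T
      rw [add_mulVec, smul_mulVec, smul_mulVec, dotProduct_add,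
        dotProduct_smul, dotProduct_smul, smul_eq_mul, smul_eq_mul]
      linarith
  -- trace relation
  have htr : ∀ T : ℝ, ∀ ω : ℝ, 0 ≤ ω →
      (χ₁ ω - χ₁ 0) * (G₁ T).trace + (χ₂ ω - χ₂ 0) * (G₂ T).trace = 0 := by
    intro T ω hω
    have := congrArg Matrix.trace (hM T ω hω)
    simpa [Matrix.trace_add, Matrix.trace_smul, smul_eq_mul] using this
  set t₁ : ℝ := (G₁ T₀).trace with ht₁
  set t₂ : ℝ := (G₂ T₀).trace with ht₂
  set l₀ : ℝ := t₂ / t₁ with hl₀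
  have hlin : ∀ ω : ℝ, 0 ≤ ω → χ₁ ω + l₀ * χ₂ ω = χ₁ 0 + l₀ * χ₂ 0 := by
    intro ω hω
    have h := htr T₀ ω hω
    have key : χ₁ ω + l₀ * χ₂ ω - (χ₁ 0 + l₀ * χ₂ 0)
        = ((χ₁ ω - χ₁ 0) * t₁ + (χ₂ ω - χ₂ 0) * t₂) / t₁ := by
      field_simp [hl₀]
      rw [hl₀, div_mul_eq_mul_div, div_mul_eq_mul_div, sub_mul, add_mul, add_mul, div_mul_cancel₀ _ hT₀, div_mul_cancel₀ _ hT₀]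
      ring
    rw [h, zero_div] at key
    linarith
  -- find ωs with χ₂ ωs ≠ χ₂ 0
  obtain ⟨ωs, hωs0, hωs⟩ : ∃ ω : ℝ, 0 ≤ ω ∧ χ₂ ω ≠ χ₂ 0 := by
    rcases hnonconst with ⟨ω₁, ω₂, hw1, hw2, hnc⟩ | ⟨ω₁, ω₂, hw1, hw2, hnc⟩
    · have h1 : ∃ ω : ℝ, 0 ≤ ω ∧ χ₁ ω ≠ χ₁ 0 := by
        by_cases h : χ₁ ω₁ = χ₁ 0
        · exact ⟨ω₂, hw2, fun hc => hnc (by rw [h, hc])⟩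
        · exact ⟨ω₁, hw1, h⟩
      obtain ⟨ω, hω, hχ⟩ := h1
      refine ⟨ω, hω, fun hc => hχ ?_⟩
      have := hlin ω hω
      rw [hc] at this
      linarith
    · by_cases h : χ₂ ω₁ = χ₂ 0
      · exact ⟨ω₂, hw2, fun hc => hnc (by rw [h, hc])⟩
      · exact ⟨ω₁, hw1, h⟩
  have hd : χ₂ ωs - χ₂ 0 ≠ 0 := sub_ne_zero.mpr hωs
  -- part 2
  have part2 : ∀ l τ : ℝ, (∀ ω : ℝ, 0 ≤ ω → χ₁ ω + l * χ₂ ω = τ) →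
      (∀ T, G₂ T = l • G₁ T) ∧ (∀ T, R T = τ * (G₁ T).trace) := by
    intro l τ hlτ
    have hτ : τ = χ₁ 0 + l * χ₂ 0 := (hlτ 0 le_rfl).symm
    have hdiff : χ₁ ωs - χ₁ 0 = -(l * (χ₂ ωs - χ₂ 0)) := by
      linear_combination (hlτ ωs hωs0) - (hlτ 0 le_rfl)
    have hG : ∀ T, G₂ T = l • G₁ T := by
      intro T
      have hMω := hM T ωs hωs0
      rw [hdiff] at hMω
      have hzero : (χ₂ ωs - χ₂ 0) • (G₂ T - l • G₁ T) = 0 := by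
        rw [smul_sub, smul_smul, ← hMω]
        module
      have := (smul_eq_zero.mp hzero).resolve_left hd
      rw [sub_eq_zero] at this
      exact this
    refine ⟨hG, fun T => ?_⟩
    rw [← h0 T, hG T, Matrix.trace_smul, smul_eq_mul, hτ]
    ring
  refine ⟨⟨(l₀, χ₁ 0 + l₀ * χ₂ 0), hlin, ?_⟩, part2⟩
  intro p hp
  have e1 : p.1 * (χ₂ ωs - χ₂ 0) = -(χ₁ ωs - χ₁ 0) := by
    linear_combination (hp ωs hωs0) - (hp 0 le_rfl)
  have e2 : l₀ * (χ₂ ωs - χ₂ 0) = -(χ₁ ωs - χ₁ 0) := by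
    linear_combination (hlin ωs hωs0) - (hlin 0 le_rfl)
  have hp1 : p.1 = l₀ := mul_right_cancel₀ hd (e1.trans e2.symm)
  have hp2 : p.2 = χ₁ 0 + l₀ * χ₂ 0 := by
    rw [← hp 0 le_rfl, hp1]
  exact Prod.ext hp1 hp2
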